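/- Let P(z) = ∑_{j=0}^m a_j z^{m-j} be a polynomial with complex coefficients and N a positive integer with φ(N) ≤ m. Then the cyclotomic polynomial Φ_N(z) divides P(z) if and only if for every h ∈ {0, 1, ..., N-1}, ∑_{d | N} μ(d) ∑_{j ≡ h - ∑_{p | d} N/p (mod N)} a_j = 0, where the inner sum over primes p dividing d is taken to be 0 when d = 1. -/

import Mathlib

open Polynomial Finset

namespace DivCycAux

variable {N : ℕ}

lemma pow_mod (η : ℂ) (hη : η ^ N = 1) (k : ℕ) : η ^ (k % N) = η ^ k := by
  conv_rhs => rw [← Nat.mod_add_div k N, pow_add, pow_mul, hη, one_pow, mul_one]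

lemma pow_val_add [NeZero N] (η : ℂ) (hη : η ^ N = 1) (x y : ZMod N) :
    η ^ (x + y).val = η ^ x.val * η ^ y.val := by
  rw [ZMod.val_add, pow_mod η hη, pow_add]

/-- Squarefree product of distinct primes. -/
lemma squarefree_prod_primes {s : Finset ℕ} (hs : ∀ p ∈ s, p.Prime) :
    Squarefree (∏ p ∈ s, p) := by
  classical
  induction s using Finset.cons_induction with
  | empty => simpa using squarefree_one
  | cons p s hp ih =>
    rw [Finset.prod_cons, Nat.squarefree_mul_iff]
    have hpp := hs p (Finset.mem_cons_self _ _)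
    have hs' : ∀ q ∈ s, q.Prime := fun q hq => hs q (Finset.mem_cons_of_mem hq)
    refine ⟨?_, hpp.squarefree, ih hs'⟩
    exact Nat.Coprime.prod_right fun q hq =>
      (Nat.coprime_primes hpp (hs' q hq)).2 (by rintro rfl; exact hp hq)

/-- Möbius sum over divisors as product over prime factors. -/
lemma moebius_prod_sum (hN : N ≠ 0) (x : ℕ → ℂ) :
    ∑ d ∈ N.divisors, (ArithmeticFunction.moebius d : ℂ) * ∏ p ∈ d.primeFactors, x p =
      ∏ p ∈ N.primeFactors, (1 - x p) := by
  classical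
  set R := ∏ p ∈ N.primeFactors, p with hR
  have hprimes : ∀ p ∈ N.primeFactors, p.Prime := fun p hp => Nat.prime_of_mem_primeFactors hp
  have hRsf : Squarefree R := squarefree_prod_primes hprimes
  have hR0 : R ≠ 0 := hRsf.ne_zero
  have hfilter : ∀ (M : ℕ),
      ∑ d ∈ M.divisors, (ArithmeticFunction.moebius d : ℂ) * ∏ p ∈ d.primeFactors, x p =
        ∑ d ∈ M.divisors.filter Squarefree,
          (ArithmeticFunction.moebius d : ℂ) * ∏ p ∈ d.primeFactors, x p := by
    intro M
    rw [Finset.sum_filter_of_ne]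
    intro d _ hd
    by_contra h
    rw [ArithmeticFunction.moebius_eq_zero_of_not_squarefree h] at hd
    simp at hd
  have hsets : N.divisors.filter Squarefree = R.divisors.filter Squarefree := by
    ext d
    simp only [Finset.mem_filter, Nat.mem_divisors]
    constructor
    · rintro ⟨⟨hdN, _⟩, hsf⟩
      refine ⟨⟨?_, hR0⟩, hsf⟩
      calc d = ∏ p ∈ d.primeFactors, p := (Nat.prod_primeFactors_of_squarefree hsf).symm
        _ ∣ R := Finset.prod_dvd_prod_of_subset _ _ _ (Nat.primeFactors_mono hdN hN)
    · rintro ⟨⟨hdR, _⟩, hsf⟩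
      exact ⟨⟨hdR.trans (Nat.prod_primeFactors_dvd N), hN⟩, hsf⟩
  rw [hfilter N, hsets, ← hfilter R]
  have key := ArithmeticFunction.IsMultiplicative.prodPrimeFactors_one_sub_of_squarefree
    (ArithmeticFunction.prodPrimeFactors x)
    (ArithmeticFunction.IsMultiplicative.prodPrimeFactors x) hRsf
  have h1 : ∀ d ∈ R.divisors,
      (ArithmeticFunction.moebius d : ℂ) * (ArithmeticFunction.prodPrimeFactors x) d =
      (ArithmeticFunction.moebius d : ℂ) * ∏ p ∈ d.primeFactors, x p := by
    intro d hd
    rw [ArithmeticFunction.prodPrimeFactors_apply (Nat.pos_of_mem_divisors hd).ne']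
  have h2 : R.primeFactors = N.primeFactors := Nat.primeFactors_prod hprimes
  rw [← Finset.sum_congr rfl h1] at *
  rw [← key, h2]
  refine Finset.prod_congr rfl fun p hp => ?_
  have hpp := hprimes p hp
  rw [ArithmeticFunction.prodPrimeFactors_apply hpp.ne_zero, hpp.primeFactors,
    Finset.prod_singleton]

/-- Convolution identity. -/
lemma conv_identity [NeZero N] (η : ℂ) (hη : η ^ N = 1) (c : ℕ → ZMod N) (e : ZMod N → ℂ)
    (S : Finset ℕ) (w : ℕ → ℂ) :
    ∑ g : ZMod N, (∑ d ∈ S, w d * e (g - c d)) * η ^ g.val =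
      (∑ d ∈ S, w d * η ^ (c d).val) * (∑ g : ZMod N, e g * η ^ g.val) := by
  have reindex : ∀ d : ℕ, ∑ g : ZMod N, e (g - c d) * η ^ g.val =
      (∑ g : ZMod N, e g * η ^ g.val) * η ^ (c d).val := by
    intro d
    rw [Finset.sum_mul]
    refine (Fintype.sum_equiv (Equiv.addRight (c d)) _ _ fun g => ?_).symm
    rw [Equiv.coe_addRight, add_sub_cancel_right, pow_val_add η hη]
    ring
  calc ∑ g : ZMod N, (∑ d ∈ S, w d * e (g - c d)) * η ^ g.val
      = ∑ d ∈ S, ∑ g : ZMod N, w d * (e (g - c d) * η ^ g.val) := by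
        simp_rw [Finset.sum_mul]
        rw [Finset.sum_comm]
        simp_rw [mul_assoc]
    _ = ∑ d ∈ S, w d * ((∑ g : ZMod N, e g * η ^ g.val) * η ^ (c d).val) := by
        simp_rw [← Finset.mul_sum, reindex]
    _ = (∑ d ∈ S, w d * η ^ (c d).val) * (∑ g : ZMod N, e g * η ^ g.val) := by
        rw [Finset.sum_mul]
        exact Finset.sum_congr rfl fun d _ => by ring

/-- Grouping of coefficients by residue class. -/
lemma group_sum [NeZero N] (η : ℂ) (hη : η ^ N = 1) (m : ℕ) (a : ℕ → ℂ) :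
    ∑ g : ZMod N, (∑ j ∈ (Finset.range (m + 1)).filter (fun j : ℕ => (j : ZMod N) = g), a j)
        * η ^ g.val =
      ∑ j ∈ Finset.range (m + 1), a j * η ^ j := by
  classical
  have : ∀ g : ZMod N,
      (∑ j ∈ (Finset.range (m + 1)).filter (fun j : ℕ => (j : ZMod N) = g), a j) * η ^ g.val =
      ∑ j ∈ (Finset.range (m + 1)).filter (fun j : ℕ => (j : ZMod N) = g), a j * η ^ j := by
    intro g
    rw [Finset.sum_mul]
    refine Finset.sum_congr rfl fun j hj => ?_
    have hg : (j : ZMod N) = g := (Finset.mem_filter.1 hj).2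
    rw [← hg, ZMod.val_natCast, pow_mod η hη]
  simp_rw [this]
  exact Finset.sum_fiberwise _ _ _

lemma delta_sum (hN : N ≠ 0) {ω : ℂ} (hω : IsPrimitiveRoot ω N) (x : ZMod N) :
    ∑ t ∈ Finset.range N, ω ^ (x.val * t) = if x = 0 then (N : ℂ) else 0 := by
  haveI : NeZero N := ⟨hN⟩
  simp_rw [pow_mul]
  by_cases hx : x = 0
  · simp [hx, ZMod.val_zero]
  · rw [if_neg hx]
    have hne : ω ^ x.val ≠ 1 := by
      refine hω.pow_ne_one_of_pos_of_lt ?_ (ZMod.val_lt x)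
      exact (Nat.pos_of_ne_zero fun h => hx ((ZMod.val_eq_zero x).1 h)).ne'
    rw [geom_sum_eq hne, ← pow_mul, mul_comm, pow_mul, hω.pow_eq_one, one_pow, sub_self,
      zero_div]

lemma fourier_vanish [NeZero N] (hN : N ≠ 0) {ω : ℂ} (hω : IsPrimitiveRoot ω N) (f : ZMod N → ℂ)
    (h : ∀ η : ℂ, η ^ N = 1 → ∑ g : ZMod N, f g * η ^ g.val = 0) (g : ZMod N) : f g = 0 := by
  have key : ∑ t ∈ Finset.range N,
      ((∑ g' : ZMod N, f g' * (ω ^ t) ^ g'.val) * (ω ^ t) ^ (-g).val) = 0 := by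
    refine Finset.sum_eq_zero fun t _ => ?_
    rw [h (ω ^ t) (by rw [← pow_mul, mul_comm, pow_mul, hω.pow_eq_one, one_pow]), zero_mul]
  have hω1 : ω ^ N = 1 := hω.pow_eq_one
  have step : ∀ t ∈ Finset.range N,
      (∑ g' : ZMod N, f g' * (ω ^ t) ^ g'.val) * (ω ^ t) ^ (-g).val =
      ∑ g' : ZMod N, f g' * ω ^ ((g' - g).val * t) := by
    intro t _
    rw [Finset.sum_mul]
    refine Finset.sum_congr rfl fun g' _ => ?_
    have : (ω ^ t) ^ g'.val * (ω ^ t) ^ (-g).val = ω ^ ((g' - g).val * t) := by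
      rw [← pow_mul, ← pow_mul, ← pow_add, ← mul_add, mul_comm t _, pow_mul, pow_add,
        ← pow_val_add ω hω1 g' (-g), ← sub_eq_add_neg, ← pow_mul]
    rw [mul_assoc, this]
  rw [Finset.sum_congr rfl step, Finset.sum_comm] at key
  have : ∀ g' : ZMod N, ∑ t ∈ Finset.range N, f g' * ω ^ ((g' - g).val * t) =
      f g' * (if g' - g = 0 then (N : ℂ) else 0) := by
    intro g'
    rw [← Finset.mul_sum, delta_sum hN hω]
  rw [Finset.sum_congr rfl (fun g' _ => this g')] at key
  have : ∑ g' : ZMod N, f g' * (if g' - g = 0 then (N : ℂ) else 0) = f g * N := by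
    rw [Finset.sum_eq_single g]
    · simp
    · intro b _ hb
      rw [if_neg (fun h => hb (by rwa [sub_eq_zero] at h)), mul_zero]
    · intro h; exact absurd (Finset.mem_univ g) h
  rw [this] at key
  have hNC : (N : ℂ) ≠ 0 := Nat.cast_ne_zero.2 hN
  exact (mul_eq_zero.1 key).resolve_right hNC

/-- Q value at a root of unity. -/
lemma Q_eq_prod (hN : N ≠ 0) (η : ℂ) (hη : η ^ N = 1) :
    ∑ d ∈ N.divisors, (ArithmeticFunction.moebius d : ℂ) *
        η ^ (((∑ p ∈ d.primeFactors, N / p : ℕ) : ZMod N)).val =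
      ∏ p ∈ N.primeFactors, (1 - η ^ (N / p)) := by
  haveI : NeZero N := ⟨hN⟩
  rw [← moebius_prod_sum hN (fun p => η ^ (N / p))]
  refine Finset.sum_congr rfl fun d _ => ?_
  congr 1
  rw [ZMod.val_natCast, pow_mod η hη, ← Finset.prod_pow_eq_pow_sum]

lemma Q_ne_zero (hN : N ≠ 0) {η : ℂ} (hη : IsPrimitiveRoot η N) :
    ∏ p ∈ N.primeFactors, (1 - η ^ (N / p)) ≠ 0 := by
  rw [Finset.prod_ne_zero_iff]
  intro p hp
  have hpp := Nat.prime_of_mem_primeFactors hp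
  have hdvd := Nat.dvd_of_mem_primeFactors hp
  have h1 : 0 < N / p := Nat.div_pos (Nat.le_of_dvd (Nat.pos_of_ne_zero hN) hdvd) hpp.pos
  have h2 : N / p < N := Nat.div_lt_self (Nat.pos_of_ne_zero hN) hpp.one_lt
  exact sub_ne_zero.2 (Ne.symm (hη.pow_ne_one_of_pos_of_lt h1.ne' h2))

lemma Q_zero_of_not_primitive (hN : N ≠ 0) {η : ℂ} (hη : η ^ N = 1)
    (hnp : ¬ IsPrimitiveRoot η N) :
    ∏ p ∈ N.primeFactors, (1 - η ^ (N / p)) = 0 := by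
  have hNpos : 0 < N := Nat.pos_of_ne_zero hN
  set e := orderOf η with he
  have heN : e ∣ N := orderOf_dvd_of_pow_eq_one hη
  have heN' : e ≠ N := by
    intro h
    exact hnp (h ▸ IsPrimitiveRoot.orderOf η)
  have hepos : 0 < e := by
    rcases Nat.eq_zero_or_pos e with h | h
    · exfalso
      exact (orderOf_eq_zero_iff.1 h) (isOfFinOrder_iff_pow_eq_one.2 ⟨N, hNpos, hη⟩)
    · exact h
  have hlt : 1 < N / e := by
    have : e < N := lt_of_le_of_ne (Nat.le_of_dvd hNpos heN) heN'
    rcases heN with ⟨k, hk⟩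
    have hk1 : 1 < k := by
      rcases Nat.lt_or_ge k 2 with h | h
      · interval_cases k <;> omega
      · omega
    rw [hk, Nat.mul_div_cancel_left _ hepos]
    exact hk1
  obtain ⟨p, hpp, hpdvd⟩ := Nat.exists_prime_and_dvd (by omega : N / e ≠ 1)
  have hpN : p ∣ N := hpdvd.trans (Nat.div_dvd_of_dvd heN)
  have hpmem : p ∈ N.primeFactors := Nat.mem_primeFactors.2 ⟨hpp, hpN, hN⟩
  refine Finset.prod_eq_zero hpmem ?_
  have hediv : e ∣ N / p := by
    rcases hpdvd with ⟨c, hc⟩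
    refine ⟨c, ?_⟩
    have : N = e * (N / e) := (Nat.mul_div_cancel' heN).symm
    rw [this, hc, ← mul_assoc, mul_comm e p, mul_assoc, Nat.mul_div_cancel_left _ hpp.pos]
  have : η ^ (N / p) = 1 := by
    rcases hediv with ⟨c, hc⟩
    rw [hc, pow_mul, pow_orderOf_eq_one, one_pow]
  rw [this, sub_self]

/-- The key equivalence. -/
theorem key_equiv (m N : ℕ) (hN : N ≠ 0) (a : ℕ → ℂ) :
    (∀ η : ℂ, IsPrimitiveRoot η N → ∑ j ∈ Finset.range (m + 1), a j * η ^ j = 0) ↔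
      (∀ g : ZMod N, ∑ d ∈ N.divisors, (ArithmeticFunction.moebius d : ℂ) *
          (∑ j ∈ (Finset.range (m + 1)).filter
            (fun j : ℕ => (j : ZMod N) = g - ((∑ p ∈ d.primeFactors, N / p : ℕ) : ZMod N)), a j)
        = 0) := by
  haveI : NeZero N := ⟨hN⟩
  obtain ⟨ω, hω⟩ : ∃ ω : ℂ, IsPrimitiveRoot ω N :=
    ⟨_, Complex.isPrimitiveRoot_exp N hN⟩
  set c : ℕ → ZMod N := fun d => ((∑ p ∈ d.primeFactors, N / p : ℕ) : ZMod N) with hc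
  set ee : ZMod N → ℂ := fun g => ∑ j ∈ (Finset.range (m + 1)).filter
      (fun j : ℕ => (j : ZMod N) = g), a j with hee
  have hT : ∀ g : ZMod N,
      ∑ d ∈ N.divisors, (ArithmeticFunction.moebius d : ℂ) *
        (∑ j ∈ (Finset.range (m + 1)).filter (fun j : ℕ => (j : ZMod N) = g - c d), a j) =
      ∑ d ∈ N.divisors, (ArithmeticFunction.moebius d : ℂ) * ee (g - c d) := fun g => rfl
  have main : ∀ η : ℂ, η ^ N = 1 →
      ∑ g : ZMod N, (∑ d ∈ N.divisors, (ArithmeticFunction.moebius d : ℂ) * ee (g - c d))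
          * η ^ g.val =
      (∏ p ∈ N.primeFactors, (1 - η ^ (N / p))) * ∑ j ∈ Finset.range (m + 1), a j * η ^ j := by
    intro η hη
    rw [conv_identity η hη c ee N.divisors (fun d => (ArithmeticFunction.moebius d : ℂ)),
      group_sum η hη m a, Q_eq_prod hN η hη]
  constructor
  · intro hA g
    rw [hT]
    refine fourier_vanish hN hω
      (fun g' => ∑ d ∈ N.divisors, (ArithmeticFunction.moebius d : ℂ) * ee (g' - c d)) ?_ g
    intro η hη
    rw [main η hη]
    by_cases hp : IsPrimitiveRoot η N
    · rw [hA η hp, mul_zero]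
    · rw [Q_zero_of_not_primitive hN hη hp, zero_mul]
  · intro hT0 η hη
    have h0 : ∑ g : ZMod N,
        (∑ d ∈ N.divisors, (ArithmeticFunction.moebius d : ℂ) * ee (g - c d)) * η ^ g.val = 0 := by
      refine Finset.sum_eq_zero fun g _ => ?_
      rw [← hT, hT0 g, zero_mul]
    rw [main η hη.pow_eq_one] at h0
    exact (mul_eq_zero.1 h0).resolve_left (Q_ne_zero hN hη)

end DivCycAux

open DivCycAux in
theorem divisibility_by_cyclotomic (m N : ℕ) (a : ℕ → ℂ) (hN : 1 ≤ N)
    (hm : N.totient ≤ m) :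
    (Polynomial.cyclotomic N ℂ ∣ ∑ j ∈ Finset.range (m + 1), C (a j) * X ^ (m - j)) ↔
      ∀ h < N,
        ∑ d ∈ N.divisors, (ArithmeticFunction.moebius d : ℂ) *
          ∑ j ∈ (Finset.range (m + 1)).filter
              (fun (j : ℕ) => (j : ℤ) ≡
                (h : ℤ) - ∑ p ∈ d.primeFactors, ((N / p : ℕ) : ℤ) [ZMOD (N : ℤ)]),
            a j = 0 := by
  haveI : NeZero N := ⟨by omega⟩
  have hN0 : N ≠ 0 := by omega
  obtain ⟨ω, hω⟩ : ∃ ω : ℂ, IsPrimitiveRoot ω N := ⟨_, Complex.isPrimitiveRoot_exp N hN0⟩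
  set P : Polynomial ℂ := ∑ j ∈ Finset.range (m + 1), C (a j) * X ^ (m - j) with hP
  have step1 : (Polynomial.cyclotomic N ℂ ∣ P) ↔
      ∀ η : ℂ, IsPrimitiveRoot η N → P.eval η = 0 := by
    rw [cyclotomic_eq_prod_X_sub_primitiveRoots hω]
    constructor
    · intro hdvd η hη
      have hmem : η ∈ primitiveRoots N ℂ := (mem_primitiveRoots (by omega)).2 hη
      exact (dvd_iff_isRoot (a := η) (p := P)).1
        ((Finset.dvd_prod_of_mem (fun μ : ℂ => X - C μ) hmem).trans hdvd)
    · intro hroot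
      refine Finset.prod_dvd_of_coprime ?_ ?_
      · intro u hu v hv huv
        exact isCoprime_X_sub_C_of_isUnit_sub (isUnit_iff_ne_zero.2 (sub_ne_zero_of_ne huv))
      · intro η hη
        exact dvd_iff_isRoot.2 (hroot η ((mem_primitiveRoots (by omega)).1 hη))
  have heval : ∀ η : ℂ, IsPrimitiveRoot η N →
      (P.eval η = 0 ↔ ∑ j ∈ Finset.range (m + 1), a j * (η⁻¹) ^ j = 0) := by
    intro η hη
    have hη0 : η ≠ 0 := hη.ne_zero hN0
    have hev : P.eval η = η ^ m * ∑ j ∈ Finset.range (m + 1), a j * (η⁻¹) ^ j := by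
      rw [hP, eval_finset_sum, Finset.mul_sum]
      refine Finset.sum_congr rfl fun j hj => ?_
      have hj' : j ≤ m := Nat.lt_succ_iff.1 (Finset.mem_range.1 hj)
      simp only [eval_mul, eval_C, eval_pow, eval_X]
      have hpow : η ^ (m - j) = η ^ m * (η⁻¹) ^ j := by
        rw [inv_pow, eq_comm, mul_inv_eq_iff_eq_mul₀ (pow_ne_zero _ hη0), ← pow_add,
          Nat.sub_add_cancel hj']
      rw [hpow]
      ring
    rw [hev, mul_eq_zero]
    constructor
    · rintro (h | h)
      · exact absurd h (pow_ne_zero _ hη0)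
      · exact h
    · exact Or.inr
  have step2 : (∀ η : ℂ, IsPrimitiveRoot η N → P.eval η = 0) ↔
      (∀ η : ℂ, IsPrimitiveRoot η N → ∑ j ∈ Finset.range (m + 1), a j * η ^ j = 0) := by
    constructor
    · intro h η hη
      have := (heval η⁻¹ hη.inv).1 (h η⁻¹ hη.inv)
      simpa [inv_inv] using this
    · intro h η hη
      exact (heval η hη).2 (h η⁻¹ hη.inv)
  have hcond : ∀ (h d j : ℕ),
      ((j : ℤ) ≡ (h : ℤ) - ∑ p ∈ d.primeFactors, ((N / p : ℕ) : ℤ) [ZMOD (N : ℤ)]) ↔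
      ((j : ZMod N) = (h : ZMod N) - ((∑ p ∈ d.primeFactors, N / p : ℕ) : ZMod N)) := by
    intro h d j
    rw [← ZMod.intCast_eq_intCast_iff]
    simp only [Int.cast_sub, Int.cast_sum, Int.cast_natCast, Nat.cast_sum]
  have step3 : (∀ h < N, ∑ d ∈ N.divisors, (ArithmeticFunction.moebius d : ℂ) *
        ∑ j ∈ (Finset.range (m + 1)).filter
            (fun (j : ℕ) => (j : ℤ) ≡
              (h : ℤ) - ∑ p ∈ d.primeFactors, ((N / p : ℕ) : ℤ) [ZMOD (N : ℤ)]),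
          a j = 0) ↔
      (∀ g : ZMod N, ∑ d ∈ N.divisors, (ArithmeticFunction.moebius d : ℂ) *
          (∑ j ∈ (Finset.range (m + 1)).filter
            (fun j : ℕ => (j : ZMod N) = g - ((∑ p ∈ d.primeFactors, N / p : ℕ) : ZMod N)), a j)
        = 0) := by
    have hfil : ∀ (h d : ℕ),
        (Finset.range (m + 1)).filter
            (fun (j : ℕ) => (j : ℤ) ≡
              (h : ℤ) - ∑ p ∈ d.primeFactors, ((N / p : ℕ) : ℤ) [ZMOD (N : ℤ)]) =
        (Finset.range (m + 1)).filter
            (fun j : ℕ =>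
              (j : ZMod N) = (h : ZMod N) - ((∑ p ∈ d.primeFactors, N / p : ℕ) : ZMod N)) := by
      intro h d
      exact Finset.filter_congr fun j _ => (hcond h d j)
    constructor
    · intro hh g
      have h1 := hh g.val (ZMod.val_lt g)
      rw [Finset.sum_congr rfl fun d _ => by rw [hfil g.val d]] at h1
      have h2 : ((g.val : ℕ) : ZMod N) = g := ZMod.natCast_rightInverse g
      rw [← h2]
      exact h1
    · intro hg h hhN
      have h1 := hg (h : ZMod N)
      rw [Finset.sum_congr rfl fun d _ => by rw [hfil h d]]
      exact h1
  rw [step1, step2, key_equiv m N hN0 a, ← step3]
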